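/- Let f : ℝ^m → ℝ be strongly pairwise monotonic with respect to feature β over feature γ (β ≠ γ). Then for every x ∈ ℝ^m at which both partial derivatives ∂f/∂x_β(x) and ∂f/∂x_γ(x) exist, one has ∂f/∂x_β(x) ≥ ∂f/∂x_γ(x). -/

import Mathlib

/-- If `f : ℝ^m → ℝ` is strongly pairwise monotonic with respect to feature `β` over
feature `γ` (`β ≠ γ`), then for every `x` at which both partial derivatives
`∂f/∂x_β(x)` and `∂f/∂x_γ(x)` exist, one has `∂f/∂x_β(x) ≥ ∂f/∂x_γ(x)`. -/
theorem strong_pairwise_mono_partial_deriv_le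
    (m : ℕ) (f : (Fin m → ℝ) → ℝ) (β γ : Fin m) (hβγ : β ≠ γ)
    (hmono : ∀ (x : Fin m → ℝ) (c : ℝ), 0 < c →
      f (Function.update x γ (x γ + c)) ≤ f (Function.update x β (x β + c)))
    (x : Fin m → ℝ) (dβ dγ : ℝ)
    (hdβ : HasDerivAt (fun s : ℝ => f (Function.update x β s)) dβ (x β))
    (hdγ : HasDerivAt (fun s : ℝ => f (Function.update x γ s)) dγ (x γ)) :
    dγ ≤ dβ := by
  set h : ℝ → ℝ := fun c =>
    f (Function.update x β (x β + c)) - f (Function.update x γ (x γ + c)) with hh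
  have hβ' : HasDerivAt (fun c : ℝ => f (Function.update x β (x β + c))) dβ 0 := by
    have := HasDerivAt.comp (x := (0:ℝ)) (h₂ := fun s => f (Function.update x β s))
      (by simpa using hdβ) ((hasDerivAt_id (0:ℝ)).const_add (x β))
    simpa [Function.comp_def] using this
  have hγ' : HasDerivAt (fun c : ℝ => f (Function.update x γ (x γ + c))) dγ 0 := by
    have := HasDerivAt.comp (x := (0:ℝ)) (h₂ := fun s => f (Function.update x γ s))
      (by simpa using hdγ) ((hasDerivAt_id (0:ℝ)).const_add (x γ))
    simpa [Function.comp_def] using this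
  have hd : HasDerivAt h (dβ - dγ) 0 := hβ'.sub hγ'
  have h0 : h 0 = 0 := by simp [hh, Function.update_eq_self]
  have hpos : ∀ c > (0:ℝ), 0 ≤ h c := fun c hc => sub_nonneg.2 (hmono x c hc)
  have hslope : Filter.Tendsto (slope h 0) (nhdsWithin 0 {(0:ℝ)}ᶜ) (nhds (dβ - dγ)) :=
    hasDerivAt_iff_tendsto_slope.1 hd
  have hslope' : Filter.Tendsto (slope h 0) (nhdsWithin 0 (Set.Ioi 0)) (nhds (dβ - dγ)) :=
    hslope.mono_left (nhdsWithin_mono _ (fun c hc => ne_of_gt hc))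
  have : 0 ≤ dβ - dγ := by
    refine ge_of_tendsto hslope' ?_
    filter_upwards [self_mem_nhdsWithin] with c hc
    have hc' : (0:ℝ) < c := hc
    have hn : 0 ≤ h c := hpos c hc'
    rw [slope_def_field, h0, sub_zero, sub_zero]
    positivity
  linarith
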